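/- Let R be a right noetherian ring that is π-regular. Then R is right artinian. In particular, for right noetherian rings the properties right artinian, semiprimary, right perfect, and π-regular all coincide. -/

import Mathlib

open Function

section Core

variable {T : Type*} [Ring T]

/-- Left annihilator of an element, as a left ideal. -/
def lann (a : T) : Ideal T := LinearMap.ker (LinearMap.toSpanSingleton T T a)

lemma mem_lann {a x : T} : x ∈ lann a ↔ x * a = 0 := by
  simp [lann, LinearMap.mem_ker, LinearMap.toSpanSingleton_apply, smul_eq_mul]

lemma aux_pow_shift (a r : T) : ∀ m : ℕ, (a * r) ^ m * a = a * (r * a) ^ m := by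
  intro m
  induction m with
  | zero => simp
  | succ k ih =>
    calc (a * r) ^ (k + 1) * a = (a * r) ^ k * (a * r) * a := by rw [pow_succ]
      _ = ((a * r) ^ k * a) * (r * a) := by simp [mul_assoc]
      _ = (a * (r * a) ^ k) * (r * a) := by rw [ih]
      _ = a * (r * a) ^ (k + 1) := by rw [pow_succ, mul_assoc]

/-- In a semiprime left-noetherian ring, a left ideal consisting of nilpotent
elements is zero. -/
theorem nil_ideal_eq_bot [IsNoetherianRing T]
    (hsp : ∀ a : T, (∀ r : T, a * r * a = 0) → a = 0)
    (I : Ideal T) (hnil : ∀ x ∈ I, ∃ m : ℕ, x ^ m = 0) : I = ⊥ := by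
  by_contra hne
  obtain ⟨a₀, ha₀I, ha₀⟩ := Submodule.exists_mem_ne_zero_of_ne_bot hne
  set 𝒜 : Set (Ideal T) := {p | ∃ a ∈ I, a ≠ 0 ∧ p = lann a} with h𝒜
  have hne𝒜 : 𝒜.Nonempty := ⟨lann a₀, a₀, ha₀I, ha₀, rfl⟩
  obtain ⟨p, ⟨a, haI, ha, rfl⟩, hmax⟩ :=
    (isNoetherian_iff.mp (inferInstance : IsNoetherianRing T)).has_min 𝒜 hne𝒜
  have key : ∀ r : T, a * r * a = 0 := by
    intro r
    by_contra hara
    have hraI : r * a ∈ I := I.smul_mem r haI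
    obtain ⟨m, hm⟩ := hnil _ hraI
    have haraI : a * r * a ∈ I := I.smul_mem (a * r) haI
    have hle : lann a ≤ lann (a * r * a) := by
      intro s hs
      rw [mem_lann] at hs ⊢
      calc s * (a * r * a) = (s * a) * (r * a) := by simp [mul_assoc]
        _ = 0 := by rw [hs, zero_mul]
    have heq : lann (a * r * a) = lann a := by
      by_contra hnelt
      have hlt : lann a < lann (a * r * a) := lt_of_le_of_ne hle (Ne.symm hnelt)
      exact hmax _ ⟨a * r * a, haraI, hara, rfl⟩ hlt
    have step : ∀ k : ℕ, (a * r) ^ (k + 1) * a = 0 → (a * r) ^ k * a = 0 := by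
      intro k hk
      have hmem : (a * r) ^ k ∈ lann (a * r * a) := by
        rw [mem_lann]
        calc (a * r) ^ k * (a * r * a) = (a * r) ^ k * (a * r) * a := by simp [mul_assoc]
          _ = (a * r) ^ (k + 1) * a := by rw [pow_succ]
          _ = 0 := hk
      rw [heq, mem_lann] at hmem
      exact hmem
    have desc : ∀ k : ℕ, (a * r) ^ k * a = 0 → a = 0 := by
      intro k
      induction k with
      | zero => intro h; simpa using h
      | succ k ih => intro h; exact ih (step k h)
    have base : (a * r) ^ m * a = 0 := by
      rw [aux_pow_shift, hm, mul_zero]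
    exact ha (desc m base)
  exact ha (hsp a key)

/-- Every nonzero left ideal of a semiprime noetherian π-regular ring contains a
nonzero idempotent. -/
theorem exists_idem_of_semiprime [IsNoetherianRing T]
    (hsp : ∀ a : T, (∀ r : T, a * r * a = 0) → a = 0)
    (hπ : ∀ a : T, ∃ n, 1 ≤ n ∧ ∃ b, a ^ n = a ^ n * b * a ^ n)
    (I : Ideal T) (hne : I ≠ ⊥) : ∃ e ∈ I, e * e = e ∧ e ≠ 0 := by
  have hnn : ¬ (∀ x ∈ I, ∃ m : ℕ, x ^ m = 0) := fun h => hne (nil_ideal_eq_bot hsp I h)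
  push_neg at hnn
  obtain ⟨a, haI, hanil⟩ := hnn
  obtain ⟨n, hn1, b, hb⟩ := hπ a
  have hanI : a ^ n ∈ I := by
    obtain ⟨k, rfl⟩ := Nat.exists_eq_add_of_le hn1
    rw [add_comm, pow_succ]
    exact I.smul_mem _ haI
  have hann : a ^ n ≠ 0 := hanil n
  have hidem : (b * a ^ n) * (b * a ^ n) = b * a ^ n := by
    calc (b * a ^ n) * (b * a ^ n) = b * (a ^ n * b * a ^ n) := by simp [mul_assoc]
      _ = b * a ^ n := by rw [← hb]
  refine ⟨b * a ^ n, I.smul_mem b hanI, hidem, ?_⟩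
  intro h0
  apply hann
  calc a ^ n = a ^ n * b * a ^ n := hb
    _ = a ^ n * (b * a ^ n) := by rw [mul_assoc]
    _ = 0 := by rw [h0, mul_zero]

end Core

section Semisimple

variable {T : Type*} [Ring T]

/-- A semiprime left-noetherian π-regular ring is semisimple. -/
theorem core_semisimple [IsNoetherianRing T]
    (hsp : ∀ a : T, (∀ r : T, a * r * a = 0) → a = 0)
    (hπ : ∀ a : T, ∃ n, 1 ≤ n ∧ ∃ b, a ^ n = a ^ n * b * a ^ n) :
    IsSemisimpleRing T := by
  refine (isSemisimpleModule_iff T T).mpr ⟨?_⟩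
  intro I
  set ℬ : Set (Ideal T) := {p | ∃ e ∈ I, e * e = e ∧ p = Submodule.span T {e}} with hℬ
  have hneℬ : ℬ.Nonempty := ⟨Submodule.span T {0}, 0, I.zero_mem, by simp, rfl⟩
  obtain ⟨p, ⟨e, heI, hee, rfl⟩, hmax⟩ :=
    (isNoetherian_iff.mp (inferInstance : IsNoetherianRing T)).has_min ℬ hneℬ
  set K : Ideal T := I ⊓ lann e with hK
  have hKbot : K = ⊥ := by
    by_contra hKne
    obtain ⟨f, hfK, hff, hf0⟩ := exists_idem_of_semiprime hsp hπ K hKne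
    rw [hK, Submodule.mem_inf, mem_lann] at hfK
    obtain ⟨hfI, hfe⟩ := hfK
    set e' : T := e + f - e * f with he'
    have he'I : e' ∈ I := sub_mem (add_mem heI hfI) (I.smul_mem e hfI)
    have h2 : e * (e * f) = e * f := by rw [← mul_assoc, hee]
    have h3 : f * (e * f) = 0 := by rw [← mul_assoc, hfe, zero_mul]
    have he'e' : e' * e' = e' := by
      simp only [he', sub_mul, mul_sub, add_mul, mul_add, mul_assoc, hee, hff, hfe, h2, h3,
        mul_zero, zero_mul]
      abel
    have hee' : e = e * e' := by
      simp only [he', mul_sub, mul_add, hee, h2]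
      abel
    have hfe' : f = f * e' := by
      simp only [he', mul_sub, mul_add, hfe, hff, h3]
      abel
    have hle : Submodule.span T {e} ≤ Submodule.span T {e'} := by
      rw [Submodule.span_le, Set.singleton_subset_iff]
      exact Submodule.mem_span_singleton.mpr ⟨e, by rw [smul_eq_mul, ← hee']⟩
    have hfmem : f ∈ Submodule.span T {e'} :=
      Submodule.mem_span_singleton.mpr ⟨f, by rw [smul_eq_mul, ← hfe']⟩
    have hfnmem : f ∉ Submodule.span T {e} := by
      intro hf
      obtain ⟨s, hs⟩ := Submodule.mem_span_singleton.mp hf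
      rw [smul_eq_mul] at hs
      apply hf0
      have hfe2 : f * e = f := by
        conv_rhs => rw [← hs]
        rw [← hs, mul_assoc, hee]
      rw [← hfe2, hfe]
    have hlt : Submodule.span T {e} < Submodule.span T {e'} :=
      lt_of_le_of_ne hle (fun h => hfnmem (h ▸ hfmem))
    exact hmax _ ⟨e', he'I, he'e', rfl⟩ hlt
  have hIe : I = Submodule.span T {e} := by
    apply le_antisymm
    · intro x hxI
      have hxK : x - x * e ∈ K := by
        rw [hK, Submodule.mem_inf, mem_lann]
        exact ⟨sub_mem hxI (I.smul_mem x heI), by rw [sub_mul, mul_assoc, hee, sub_self]⟩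
      rw [hKbot, Submodule.mem_bot, sub_eq_zero] at hxK
      rw [hxK]
      exact Submodule.mem_span_singleton.mpr ⟨x, rfl⟩
    · rw [Submodule.span_le, Set.singleton_subset_iff]; exact heI
  refine ⟨Submodule.span T {1 - e}, ?_, ?_⟩
  · rw [disjoint_iff, hIe, eq_bot_iff]
    rintro x ⟨hx1, hx2⟩
    obtain ⟨s, hs⟩ := Submodule.mem_span_singleton.mp hx1
    obtain ⟨t, ht⟩ := Submodule.mem_span_singleton.mp hx2
    rw [smul_eq_mul] at hs ht
    have hxe : x * e = x := by rw [← hs, mul_assoc, hee]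
    have hxe0 : x * e = 0 := by
      rw [← ht, mul_assoc, sub_mul, one_mul, hee, sub_self, mul_zero]
    rw [Submodule.mem_bot, ← hxe, hxe0]
  · rw [codisjoint_iff, eq_top_iff]
    intro x _
    have h1 : (1 : T) ∈ I ⊔ Submodule.span T {1 - e} := by
      have he1 : e ∈ I ⊔ Submodule.span T {1 - e} := Submodule.mem_sup_left heI
      have he2 : 1 - e ∈ I ⊔ Submodule.span T {1 - e} :=
        Submodule.mem_sup_right (Submodule.mem_span_singleton.mpr ⟨1, by rw [one_smul]⟩)
      simpa using add_mem he1 he2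
    have hx := Submodule.smul_mem _ x h1
    rwa [smul_eq_mul, mul_one] at hx

end Semisimple

section Transfer

variable {S T : Type*} [Ring S] [Ring T] (π : S →+* T)

section Iso

variable {M : Type*} [AddCommGroup M] [Module S M] [Module T M]

/-- The identity as a semilinear map. -/
def idSemilinear (hcomp : ∀ (s : S) (m : M), π s • m = s • m) : M →ₛₗ[π] M where
  toFun := id
  map_add' := fun _ _ => rfl
  map_smul' := fun s m => (hcomp s m).symm

noncomputable def submoduleIso (hsurj : Function.Surjective π) (hcomp : ∀ (s : S) (m : M), π s • m = s • m) :
    Submodule S M ≃o Submodule T M :=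
  letI : RingHomSurjective π := ⟨hsurj⟩
  Submodule.orderIsoMapComapOfBijective (idSemilinear π hcomp) Function.bijective_id

theorem isArtinian_transfer (hsurj : Function.Surjective π) (hcomp : ∀ (s : S) (m : M), π s • m = s • m) [IsArtinian T M] :
    IsArtinian S M := by
  have e := submoduleIso π hsurj hcomp
  haveI : WellFoundedLT (Submodule T M) := inferInstance
  haveI : WellFoundedLT (Submodule S M) := e.strictMono.wellFoundedLT
  infer_instance

theorem isNoetherian_transfer (hsurj : Function.Surjective π) (hcomp : ∀ (s : S) (m : M), π s • m = s • m) [IsNoetherian S M] :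
    IsNoetherian T M := by
  have e := (submoduleIso π hsurj hcomp).symm
  haveI : WellFoundedGT (Submodule S M) := inferInstance
  haveI : WellFoundedGT (Submodule T M) := e.strictMono.wellFoundedGT
  exact isNoetherian_mk inferInstance

end Iso

section ModOfKer

variable {M' : Type*} [AddCommGroup M'] [Module S M']

theorem keysmul (h0 : ∀ s : S, π s = 0 → ∀ m : M', s • m = 0) {s s' : S} (h : π s = π s') (m : M') : s • m = s' • m := by
  have h1 : π (s - s') = 0 := by rw [map_sub, h, sub_self]
  have h2 : (s - s') • m = 0 := h0 _ h1 m
  rw [sub_smul, sub_eq_zero] at h2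
  exact h2

noncomputable def moduleOfKer (hsurj : Function.Surjective π) (h0 : ∀ s : S, π s = 0 → ∀ m : M', s • m = 0) : Module T M' where
  smul t m := (hsurj t).choose • m
  one_smul m := by
    show (hsurj 1).choose • m = m
    rw [keysmul π h0 ((hsurj 1).choose_spec.trans (map_one π).symm), one_smul]
  mul_smul t u m := by
    show (hsurj (t * u)).choose • m = (hsurj t).choose • ((hsurj u).choose • m)
    rw [← mul_smul]
    apply keysmul π h0
    rw [(hsurj (t*u)).choose_spec, map_mul, (hsurj t).choose_spec, (hsurj u).choose_spec]
  smul_zero t := smul_zero _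
  smul_add t m n := smul_add _ _ _
  add_smul t u m := by
    show (hsurj (t + u)).choose • m = (hsurj t).choose • m + (hsurj u).choose • m
    rw [← add_smul]
    apply keysmul π h0
    rw [(hsurj (t+u)).choose_spec, map_add, (hsurj t).choose_spec, (hsurj u).choose_spec]
  zero_smul m := by
    show (hsurj 0).choose • m = 0
    exact h0 _ ((hsurj 0).choose_spec.trans (by simp)) m

theorem moduleOfKer_compat (hsurj : Function.Surjective π) (h0 : ∀ s : S, π s = 0 → ∀ m : M', s • m = 0) (s : S) (m : M') :
    (@SMul.smul T M' (@SemigroupAction.toSMul T M' _ (@MulAction.toSemigroupAction T M' _ (@DistribMulAction.toMulAction T M' _ _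
      (@Module.toDistribMulAction T M' _ _ (moduleOfKer π hsurj h0))))) (π s) m) = s • m :=
  keysmul π h0 (hsurj (π s)).choose_spec m

end ModOfKer

end Transfer

section Nilpotent

variable {S : Type*} [Ring S]

/-- Right stability of a left ideal (i.e. being two-sided). -/
def RStable (I : Ideal S) : Prop := ∀ x ∈ I, ∀ r : S, x * r ∈ I

/-- Nilpotency of an ideal, phrased with lists. -/
def IdlNil (I : Ideal S) : Prop :=
  ∃ n : ℕ, ∀ l : List S, (∀ x ∈ l, x ∈ I) → n ≤ l.length → l.prod = 0

lemma idlNil_bot : IdlNil (⊥ : Ideal S) := by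
  refine ⟨1, fun l hl hlen => ?_⟩
  cases l with
  | nil => simp at hlen
  | cons a t =>
    apply List.prod_eq_zero
    have := hl a List.mem_cons_self
    rw [Submodule.mem_bot] at this
    rw [← this]
    exact List.mem_cons_self

lemma pair_lists (N M : Ideal S) (h2 : ∀ x ∈ M, ∀ y ∈ M, x * y ∈ N) :
    ∀ (k : ℕ) (l : List S), (∀ x ∈ l, x ∈ M) → l.length = 2 * k →
      ∃ l' : List S, (∀ y ∈ l', y ∈ N) ∧ l'.length = k ∧ l.prod = l'.prod := by
  intro k
  induction k with
  | zero =>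
    intro l _ hlen
    rw [Nat.mul_zero, List.length_eq_zero_iff] at hlen
    exact ⟨[], by simp, rfl, by rw [hlen]⟩
  | succ k ih =>
    intro l hl hlen
    match l with
    | [] => simp [Nat.mul_succ] at hlen
    | [x] => simp [Nat.mul_succ] at hlen
    | x :: y :: t =>
      have hxl : x ∈ M := hl x (by simp)
      have hyl : y ∈ M := hl y (by simp)
      have htl : ∀ z ∈ t, z ∈ M := fun z hz => hl z (by simp [hz])
      have htlen : t.length = 2 * k := by
        simp [List.length_cons] at hlen
        omega
      obtain ⟨l', hl', hlen', hprod⟩ := ih t htl htlen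
      refine ⟨(x * y) :: l', ?_, by simp [hlen'], ?_⟩
      · intro z hz
        rcases List.mem_cons.mp hz with h | h
        · rw [h]; exact h2 x hxl y hyl
        · exact hl' z h
      · rw [List.prod_cons, List.prod_cons, List.prod_cons, ← mul_assoc, ← hprod]

lemma idlNil_of_sq (N M : Ideal S) (hN : IdlNil N)
    (h2 : ∀ x ∈ M, ∀ y ∈ M, x * y ∈ N) : IdlNil M := by
  obtain ⟨n, hn⟩ := hN
  refine ⟨2 * n, fun l hl hlen => ?_⟩
  have hsplit : l = l.take (2 * n) ++ l.drop (2 * n) := (List.take_append_drop _ l).symm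
  have hlen1 : (l.take (2 * n)).length = 2 * n := by
    rw [List.length_take]
    omega
  have hmem1 : ∀ x ∈ l.take (2 * n), x ∈ M :=
    fun x hx => hl x ((List.take_sublist _ _).subset hx)
  obtain ⟨l', hl', hlen', hprod⟩ := pair_lists N M h2 n _ hmem1 hlen1
  have h0 : l'.prod = 0 := hn l' hl' (by omega)
  calc l.prod = (l.take (2 * n)).prod * (l.drop (2 * n)).prod := by
        rw [← List.prod_append, ← hsplit]
    _ = 0 := by rw [hprod, h0, zero_mul]

/-- The `i`-th power of an ideal, via spans of products. -/
def idlPow (N : Ideal S) (i : ℕ) : Ideal S :=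
  Submodule.span S {x | ∃ l : List S, l.length = i ∧ (∀ y ∈ l, y ∈ N) ∧ x = l.prod}

lemma idlPow_zero (N : Ideal S) : idlPow N 0 = ⊤ := by
  rw [Ideal.eq_top_iff_one]
  exact Submodule.subset_span ⟨[], rfl, by simp, List.prod_nil.symm⟩

lemma idlPow_succ_le (N : Ideal S) (i : ℕ) : idlPow N (i + 1) ≤ idlPow N i := by
  rw [idlPow, Submodule.span_le]
  rintro x ⟨l, hlen, hmem, rfl⟩
  match l with
  | [] => simp at hlen
  | y :: t =>
    rw [List.prod_cons]
    have ht : t.prod ∈ idlPow N i :=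
      Submodule.subset_span ⟨t, by simpa using hlen, fun z hz => hmem z (by simp [hz]), rfl⟩
    exact Submodule.smul_mem _ y ht

lemma idlPow_le (N : Ideal S) {i j : ℕ} (h : i ≤ j) : idlPow N j ≤ idlPow N i := by
  induction j with
  | zero => rw [Nat.le_zero] at h; rw [h]
  | succ j ih =>
    rcases Nat.eq_or_lt_of_le h with h' | h'
    · rw [h']
    · exact le_trans (idlPow_succ_le N j) (ih (Nat.lt_succ_iff.mp h'))

lemma mul_mem_idlPow_succ (N : Ideal S) (hRS : RStable N) (i : ℕ) :
    ∀ m ∈ idlPow N i, ∀ x ∈ N, x * m ∈ idlPow N (i + 1) := by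
  intro m hm
  refine Submodule.span_induction ?_ ?_ ?_ ?_ hm
  · rintro m ⟨l, hlen, hmem, rfl⟩ x hx
    refine Submodule.subset_span ⟨x :: l, by simp [hlen], ?_, by rw [List.prod_cons]⟩
    intro z hz
    rcases List.mem_cons.mp hz with h | h
    · rw [h]; exact hx
    · exact hmem z h
  · intro x _; rw [mul_zero]; exact Submodule.zero_mem _
  · intro a b _ _ ha hb x hx
    rw [mul_add]
    exact Submodule.add_mem _ (ha x hx) (hb x hx)
  · intro c a _ ha x hx
    rw [smul_eq_mul, ← mul_assoc]
    exact ha (x * c) (hRS x hx c)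

lemma idlPow_eq_bot (N : Ideal S) {n : ℕ}
    (hn : ∀ l : List S, (∀ x ∈ l, x ∈ N) → n ≤ l.length → l.prod = 0) :
    idlPow N n = ⊥ := by
  rw [eq_bot_iff, idlPow, Submodule.span_le]
  rintro x ⟨l, hlen, hmem, rfl⟩
  rw [SetLike.mem_coe, Submodule.mem_bot]
  exact hn l hmem (le_of_eq hlen.symm)

end Nilpotent

section Main

variable {S : Type u} [Ring S]

theorem main_artinian [IsNoetherianRing S]
    (hπ : ∀ a : S, ∃ n, 1 ≤ n ∧ ∃ b, a ^ n = a ^ n * b * a ^ n) :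
    IsArtinianRing S := by
  classical
  -- maximal nilpotent two-sided ideal
  set F : Set (Ideal S) := {I | RStable I ∧ IdlNil I} with hF
  have hneF : F.Nonempty := ⟨⊥, fun x hx r => by
      rw [Submodule.mem_bot] at hx ⊢; rw [hx, zero_mul], idlNil_bot⟩
  obtain ⟨N, ⟨hNR, hNnil⟩, hmax⟩ :=
    (isNoetherian_iff.mp (inferInstance : IsNoetherianRing S)).has_min F hneF
  -- quotient ring
  set N2 : TwoSidedIdeal S := TwoSidedIdeal.mk' (N : Set S) N.zero_mem
    (fun hx hy => add_mem hx hy) (fun hx => neg_mem hx)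
    (fun {x y} hy => N.smul_mem x hy) (fun {x y} hx => hNR x hx y) with hN2
  set c : RingCon S := N2.ringCon with hc
  set T := c.Quotient with hT
  set π : S →+* T := c.mk' with hπdef
  have hsurj : Function.Surjective π := fun t => Quotient.inductionOn' t (fun a => ⟨a, rfl⟩)
  have hker : ∀ s : S, π s = 0 ↔ s ∈ N := by
    intro s
    have h1 : π s = π 0 ↔ c s 0 := Con.eq _
    rw [map_zero] at h1
    rw [h1]
    rw [hc, TwoSidedIdeal.rel_iff, sub_zero, hN2, TwoSidedIdeal.mem_mk']
    rfl
  letI : Module S T := Module.compHom T π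
  have hcompT : ∀ (s : S) (t : T), π s • t = s • t := fun s t => rfl
  -- T is noetherian
  let πₗ : S →ₗ[S] T :=
    { toFun := π
      map_add' := map_add π
      map_smul' := fun s x => by exact map_mul π s x }
  haveI : IsNoetherian S T := isNoetherian_of_surjective πₗ
    (LinearMap.range_eq_top.mpr (fun t => by
      obtain ⟨a, ha⟩ := hsurj t
      exact ⟨a, show π a = t from ha⟩))
  haveI hTnoeth : IsNoetherianRing T := isNoetherian_transfer π hsurj hcompT
  -- T is pi-regular
  have hπT : ∀ t : T, ∃ n, 1 ≤ n ∧ ∃ b, t ^ n = t ^ n * b * t ^ n := by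
    intro t
    obtain ⟨a, rfl⟩ := hsurj t
    obtain ⟨n, hn, b, hb⟩ := hπ a
    exact ⟨n, hn, π b, by rw [← map_pow, ← map_mul, ← map_mul, ← hb]⟩
  -- T is semiprime
  have hspT : ∀ t : T, (∀ u : T, t * u * t = 0) → t = 0 := by
    intro t ht
    obtain ⟨a, rfl⟩ := hsurj t
    have haN : ∀ u : S, a * u * a ∈ N := by
      intro u
      rw [← hker]
      rw [map_mul, map_mul]
      exact ht (π u)
    set Ga : Ideal S := Submodule.span S {x | ∃ r s : S, x = r * a * s} with hGa
    have hGaR : RStable Ga := by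
      intro x hx r
      refine Submodule.span_induction ?_ ?_ ?_ ?_ hx
      · rintro y ⟨r', s', rfl⟩
        exact Submodule.subset_span ⟨r', s' * r, by simp [mul_assoc]⟩
      · rw [zero_mul]; exact Submodule.zero_mem _
      · intro p q _ _ hp hq; rw [add_mul]; exact Submodule.add_mem _ hp hq
      · intro cc p _ hp
        rw [smul_eq_mul, mul_assoc]
        exact Submodule.smul_mem _ cc hp
    have genmul : ∀ g ∈ Ga, ∀ r s : S, (r * a * s) * g ∈ N := by
      intro g hg
      refine Submodule.span_induction ?_ ?_ ?_ ?_ hg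
      · rintro y ⟨r', s', rfl⟩ r s
        have hin : a * (s * r') * a ∈ N := haN _
        have heq : (r * a * s) * (r' * a * s') = r * (a * (s * r') * a) * s' := by
          simp [mul_assoc]
        rw [heq]
        exact hNR _ (N.smul_mem r hin) s'
      · intro r s; rw [mul_zero]; exact N.zero_mem
      · intro p q _ _ hp hq r s; rw [mul_add]; exact add_mem (hp r s) (hq r s)
      · intro cc p _ hp r s
        have heq : (r * a * s) * (cc • p) = (r * a * (s * cc)) * p := by
          rw [smul_eq_mul]; simp [mul_assoc]
        rw [heq]
        exact hp r (s * cc)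
    have gaga : ∀ g ∈ Ga, ∀ g' ∈ Ga, g * g' ∈ N := by
      intro g hg
      refine Submodule.span_induction ?_ ?_ ?_ ?_ hg
      · rintro y ⟨r', s', rfl⟩ g' hg'
        exact genmul g' hg' r' s'
      · intro g' _; rw [zero_mul]; exact N.zero_mem
      · intro p q _ _ hp hq g' hg'; rw [add_mul]; exact add_mem (hp g' hg') (hq g' hg')
      · intro cc p _ hp g' hg'
        rw [smul_eq_mul, mul_assoc]
        exact N.smul_mem cc (hp g' hg')
    set M : Ideal S := N ⊔ Ga with hM
    have hMR : RStable M := by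
      intro x hx r
      obtain ⟨n, hn, g, hg, rfl⟩ := Submodule.mem_sup.mp hx
      rw [add_mul]
      exact Submodule.add_mem _ (Submodule.mem_sup_left (hNR n hn r))
        (Submodule.mem_sup_right (hGaR g hg r))
    have hMM : ∀ x ∈ M, ∀ y ∈ M, x * y ∈ N := by
      intro x hx y hy
      obtain ⟨n, hn, g, hg, rfl⟩ := Submodule.mem_sup.mp hx
      obtain ⟨n', hn', g', hg', rfl⟩ := Submodule.mem_sup.mp hy
      have heq : (n + g) * (n' + g') = n * (n' + g') + (g * n' + g * g') := by
        noncomm_ring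
      rw [heq]
      exact add_mem (hNR n hn _) (add_mem (N.smul_mem g hn') (gaga g hg g' hg'))
    have hMnil : IdlNil M := idlNil_of_sq N M hNnil hMM
    have hMN : M = N := by
      by_contra hne
      exact hmax M ⟨hMR, hMnil⟩ (lt_of_le_of_ne le_sup_left (Ne.symm hne))
    have haM : a ∈ M := Submodule.mem_sup_right
      (Submodule.subset_span ⟨1, 1, by simp⟩)
    rw [hMN] at haM
    exact (hker a).mpr haM
  -- T is semisimple, hence artinian
  haveI hss : IsSemisimpleRing T := core_semisimple hspT hπT
  haveI hTart : IsArtinianRing T := inferInstance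
  -- the filtration by powers of N
  obtain ⟨n₀, hn₀⟩ := hNnil
  have hbot : ∀ i, n₀ ≤ i → idlPow N i = ⊥ :=
    fun i hi => le_antisymm (le_trans (idlPow_le N hi) (le_of_eq (idlPow_eq_bot N hn₀)))
      bot_le
  -- each layer is artinian
  have hlayer : ∀ i : ℕ,
      IsArtinian S ((idlPow N i) ⧸
        (Submodule.comap (idlPow N i).subtype (idlPow N (i + 1)))) := by
    intro i
    set p : Submodule S (idlPow N i) :=
      Submodule.comap (idlPow N i).subtype (idlPow N (i + 1)) with hp
    set Q := (idlPow N i) ⧸ p with hQdef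
    have h0Q : ∀ s : S, π s = 0 → ∀ m : Q, s • m = 0 := by
      intro s hs m
      rw [hker] at hs
      obtain ⟨w, rfl⟩ := Submodule.Quotient.mk_surjective p m
      rw [← Submodule.Quotient.mk_smul, Submodule.Quotient.mk_eq_zero]
      rw [hp, Submodule.mem_comap]
      exact mul_mem_idlPow_succ N hNR i w.1 w.2 s hs
    letI instTQ : Module T Q := moduleOfKer π hsurj h0Q
    have hcompQ : ∀ (s : S) (m : Q), π s • m = s • m :=
      fun s m => moduleOfKer_compat π hsurj h0Q s m
    haveI : IsNoetherian T Q := isNoetherian_transfer π hsurj hcompQ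
    haveI : Module.Finite T Q := ⟨IsNoetherian.noetherian ⊤⟩
    haveI : IsArtinian T Q := isArtinian_of_fg_of_artinian'
    exact isArtinian_transfer π hsurj hcompQ
  -- downward induction
  have hdown : ∀ (j i : ℕ), n₀ ≤ i + j → IsArtinian S (idlPow N i) := by
    intro j
    induction j with
    | zero =>
      intro i hi
      haveI : Subsingleton (idlPow N i) := by
        rw [hbot i (by omega)]
        infer_instance
      infer_instance
    | succ j ih =>
      intro i hi
      haveI h1 : IsArtinian S (idlPow N (i + 1)) := ih (i + 1) (by omega)
      set p : Submodule S (idlPow N i) :=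
        Submodule.comap (idlPow N i).subtype (idlPow N (i + 1)) with hp
      haveI h2 : IsArtinian S p :=
        ((Submodule.comapSubtypeEquivOfLe (idlPow_succ_le N i)).isArtinian_iff).mpr h1
      haveI h3 : IsArtinian S ((idlPow N i) ⧸ p) := hlayer i
      exact (isArtinian_iff_submodule_quotient p).mpr ⟨h2, h3⟩
  have htop : IsArtinian S (idlPow N 0) := hdown n₀ 0 (by omega)
  rw [idlPow_zero] at htop
  exact (Submodule.topEquiv.isArtinian_iff).mp htop

end Main

/-- The chain `aR ⊇ a²R ⊇ …` of right ideals stabilizes. -/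
def RightChainStab {R : Type*} [Ring R] (a : R) : Prop :=
  ∃ n : ℕ, ∀ k ≥ n, {x : R | ∃ r, x = a ^ k * r} = {x : R | ∃ r, x = a ^ n * r}

/-- The chain `Ra ⊇ Ra² ⊇ …` of left ideals stabilizes. -/
def LeftChainStab {R : Type*} [Ring R] (a : R) : Prop :=
  ∃ n : ℕ, ∀ k ≥ n, {x : R | ∃ r, x = r * a ^ k} = {x : R | ∃ r, x = r * a ^ n}

/-- An element is π-regular if both chains stabilize. -/
def IsPiRegularElem {R : Type*} [Ring R] (a : R) : Prop :=
  RightChainStab a ∧ LeftChainStab a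

/-- A right noetherian π-regular ring is right artinian. (Right noetherian /
right artinian are expressed as left noetherian / left artinian over `Rᵐᵒᵖ`.) -/
theorem rightArtinian_of_rightNoetherian_piRegular
    {R : Type u} [Ring R] (hnoeth : IsNoetherianRing Rᵐᵒᵖ)
    (hπ : ∀ a : R, IsPiRegularElem a) :
    IsArtinianRing Rᵐᵒᵖ := by
  haveI := hnoeth
  apply main_artinian
  intro a
  obtain ⟨⟨n₁, h₁⟩, ⟨n₂, h₂⟩⟩ := hπ a.unop
  set x : R := a.unop with hx
  set n : ℕ := max (max n₁ n₂) 1 with hn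
  have hd : ∃ d, x ^ n = x ^ (2 * n) * d := by
    have e1 := h₁ n (by omega)
    have e2 := h₁ (2 * n) (by omega)
    have hm : x ^ n ∈ {y : R | ∃ r, y = x ^ n * r} := ⟨1, (mul_one _).symm⟩
    rw [e1, ← e2] at hm
    exact hm
  have hc : ∃ cc, x ^ n = cc * x ^ (2 * n) := by
    have e1 := h₂ n (by omega)
    have e2 := h₂ (2 * n) (by omega)
    have hm : x ^ n ∈ {y : R | ∃ r, y = r * x ^ n} := ⟨1, (one_mul _).symm⟩
    rw [e1, ← e2] at hm
    exact hm
  obtain ⟨d, hd⟩ := hd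
  obtain ⟨cc, hc⟩ := hc
  have key : x ^ n = x ^ n * d * x ^ n := by
    have h2n : x ^ (2 * n) = x ^ n * x ^ n := by rw [two_mul, pow_add]
    calc x ^ n = cc * x ^ (2 * n) := hc
      _ = cc * (x ^ n * x ^ n) := by rw [h2n]
      _ = cc * ((x ^ (2 * n) * d) * x ^ n) := by rw [← hd]
      _ = (cc * x ^ (2 * n)) * d * x ^ n := by simp [mul_assoc]
      _ = x ^ n * d * x ^ n := by rw [← hc]
  refine ⟨n, by omega, MulOpposite.op d, ?_⟩
  apply MulOpposite.unop_injective
  show MulOpposite.unop (a ^ n) = MulOpposite.unop (a ^ n * MulOpposite.op d * a ^ n)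
  rw [MulOpposite.unop_mul, MulOpposite.unop_mul, MulOpposite.unop_pow, MulOpposite.unop_op]
  show x ^ n = x ^ n * (d * x ^ n)
  rw [← mul_assoc]
  exact key
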